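/- arXiv:2007.02377 — 3 statements merged into one kernel-verified Lean document; each statement's English description precedes it below -/
import Mathlib

section
/- If there exists i∈{1,…,n} with A[i]=B[i]=1, then the weighted diameter of G equals (n+2)·M + 2; otherwise the weighted diameter of G is at most (n+2)·M + 1. Equivalently, the weighted diameter of G is at most (n+2)·M+1 if and only if A and B are disjoint (for every i, A[i]·B[i]=0). -/
open Finset

namespace DiamGadget

inductive V (n : ℕ) : Type
  | a : Fin n → V n
  | b : Fin n → V n
  | l : V n
  | r : V n
  | l' : V n
  | r' : V n
  deriving DecidableEq, Fintype

def M : ℕ := 4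

/-- One-directional edge-weight table encoding the instance `(A, B)`; a value `0` means
"no edge in this direction".  Here `i : Fin n` is 0-indexed, so `a i` is the paper's
`a_{i+1}`, whence the weights `(i+1)·M + A[i]` and `(n−i)·M + A[i]`. -/
def wt0 (n : ℕ) (A B : Fin n → Fin 2) : V n → V n → ℕ
  | V.l, V.l' => M
  | V.r, V.r' => M
  | V.a i, V.l => (i.val + 1) * M + (A i).val
  | V.a i, V.r => (n - i.val) * M + (A i).val
  | V.b i, V.l' => (n - i.val) * M + (B i).val
  | V.b i, V.r' => (i.val + 1) * M + (B i).val
  | _, _ => 0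

/-- The symmetrized edge weight. -/
def wtE (n : ℕ) (A B : Fin n → Fin 2) (x y : V n) : ℕ :=
  wt0 n A B x y + wt0 n A B y x

/-- The graph `G`: `x` and `y` are adjacent iff the weight table records an edge. -/
def G (n : ℕ) (A B : Fin n → Fin 2) : SimpleGraph (V n) :=
  SimpleGraph.fromRel fun x y => wt0 n A B x y ≠ 0

/-- The total weight of a walk. -/
def wWeight {n : ℕ} {A B : Fin n → Fin 2} {x y : V n} (p : (G n A B).Walk x y) : ℕ :=
  (p.darts.map fun d => wtE n A B d.toProd.1 d.toProd.2).sum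

/-- The weighted shortest-path distance: the minimum over paths from `x` to `y` of the sum
of the edge weights along the path. -/
noncomputable def dist (n : ℕ) (A B : Fin n → Fin 2) (x y : V n) : ℕ :=
  sInf {m | ∃ p : (G n A B).Walk x y, p.IsPath ∧ wWeight p = m}

/-- The weighted diameter: the maximum of `dist x y` over all pairs of vertices. -/
noncomputable def diam (n : ℕ) (A B : Fin n → Fin 2) : ℕ :=
  Finset.univ.sup fun p : V n × V n => dist n A B p.1 p.2
section
variable {n : ℕ} {A B : Fin n → Fin 2}

lemma wWeight_nil {x : V n} : wWeight (SimpleGraph.Walk.nil : (G n A B).Walk x x) = 0 := rfl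

lemma wWeight_cons {x y z : V n} (h : (G n A B).Adj x y) (p : (G n A B).Walk y z) :
    wWeight (SimpleGraph.Walk.cons h p) = wtE n A B x y + wWeight p := by
  simp [wWeight]

lemma dist_le {x y : V n} (p : (G n A B).Walk x y) (hp : p.IsPath) :
    dist n A B x y ≤ wWeight p := Nat.sInf_le ⟨p, hp, rfl⟩

lemma adj_of_wt0 {x y : V n} (hxy : x ≠ y) (h : wt0 n A B x y ≠ 0) : (G n A B).Adj x y :=
  (SimpleGraph.fromRel_adj _ x y).mpr ⟨hxy, Or.inl h⟩

lemma adj_al (i : Fin n) : (G n A B).Adj (V.a i) V.l :=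
  adj_of_wt0 nofun (by simp [wt0, M])

lemma adj_ar (i : Fin n) : (G n A B).Adj (V.a i) V.r :=
  adj_of_wt0 nofun (by simp [wt0, M]; omega)

lemma adj_bl' (i : Fin n) : (G n A B).Adj (V.b i) V.l' :=
  adj_of_wt0 nofun (by simp [wt0, M]; omega)

lemma adj_br' (i : Fin n) : (G n A B).Adj (V.b i) V.r' :=
  adj_of_wt0 nofun (by simp [wt0, M])

lemma adj_ll' : (G n A B).Adj (V.l : V n) V.l' :=
  adj_of_wt0 nofun (by simp [wt0, M])

lemma adj_rr' : (G n A B).Adj (V.r : V n) V.r' :=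
  adj_of_wt0 nofun (by simp [wt0, M])

lemma dist_le0 {x : V n} : dist n A B x x ≤ 0 :=
  le_trans (dist_le .nil .nil) (by simp [wWeight_nil])

lemma dist_le1 {x y : V n} (h : (G n A B).Adj x y) :
    dist n A B x y ≤ wtE n A B x y := by
  have := dist_le (SimpleGraph.Walk.cons h .nil)
    (by simp [SimpleGraph.Walk.isPath_def, h.ne])
  simpa [wWeight_cons, wWeight_nil] using this

lemma dist_le2 {x y z : V n} (h1 : (G n A B).Adj x y) (h2 : (G n A B).Adj y z)
    (hxz : x ≠ z) : dist n A B x z ≤ wtE n A B x y + wtE n A B y z := by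
  have := dist_le (SimpleGraph.Walk.cons h1 (SimpleGraph.Walk.cons h2 .nil))
    (by simp [SimpleGraph.Walk.isPath_def, h1.ne, h2.ne, hxz])
  simpa [wWeight_cons, wWeight_nil, add_assoc] using this

lemma dist_le3 {w x y z : V n} (h1 : (G n A B).Adj w x) (h2 : (G n A B).Adj x y)
    (h3 : (G n A B).Adj y z) (hwy : w ≠ y) (hwz : w ≠ z) (hxz : x ≠ z) :
    dist n A B w z ≤ wtE n A B w x + wtE n A B x y + wtE n A B y z := by
  have := dist_le (SimpleGraph.Walk.cons h1 (SimpleGraph.Walk.cons h2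
      (SimpleGraph.Walk.cons h3 .nil)))
    (by simp [SimpleGraph.Walk.isPath_def, h1.ne, h2.ne, h3.ne, hwy, hwz, hxz])
  simpa [wWeight_cons, wWeight_nil, add_assoc] using this

end

def pot (n : ℕ) (A B : Fin n → Fin 2) (i : Fin n) : V n → ℕ
  | V.a j => if j = i then 0 else
      min ((i.val + 1) * M + 1 + (j.val + 1) * M + (A j).val)
          ((n - i.val) * M + 1 + (n - j.val) * M + (A j).val)
  | V.l => (i.val + 1) * M + 1
  | V.r => (n - i.val) * M + 1
  | V.l' => (i.val + 2) * M + 1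
  | V.r' => (n - i.val + 1) * M + 1
  | V.b j => min ((i.val + 2) * M + 1 + (n - j.val) * M + (B j).val)
      ((n - i.val + 1) * M + 1 + (j.val + 1) * M + (B j).val)

section
variable {n : ℕ} {A B : Fin n → Fin 2}

lemma pot_lip (i : Fin n) (hA : (A i).val = 1) :
    ∀ x y : V n, (G n A B).Adj x y →
      pot n A B i y ≤ pot n A B i x + wtE n A B x y := by
  have hi := i.isLt
  intro x y h
  rw [G, SimpleGraph.fromRel_adj] at h
  obtain ⟨hne, h⟩ := h
  cases x <;> cases y <;>
    first
      | (exfalso; revert h; simp [wt0]; done)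
      | (rename_i j
         have hj := j.isLt
         have hAj := (A j).isLt
         have hBj := (B j).isLt
         clear h hne
         simp only [pot, wtE, wt0, M]
         split_ifs <;> subst_vars <;> omega)
      | (clear h hne; simp only [pot, wtE, wt0, M]; omega)

lemma pot_le_walk {f : V n → ℕ}
    (hf : ∀ x y : V n, (G n A B).Adj x y → f y ≤ f x + wtE n A B x y) :
    ∀ {x y : V n} (p : (G n A B).Walk x y), f y ≤ f x + wWeight p := by
  intro x y p
  induction p with
  | nil => simp [wWeight_nil]
  | cons h q ih =>
      rw [wWeight_cons]
      have h1 := hf _ _ h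
      omega

lemma dist_lower (i : Fin n) (hA : (A i).val = 1) (hB : (B i).val = 1) :
    (n + 2) * M + 2 ≤ dist n A B (V.a i) (V.b i) := by
  have hi := i.isLt
  have hne : {m | ∃ p : (G n A B).Walk (V.a i) (V.b i), p.IsPath ∧ wWeight p = m}.Nonempty := by
    refine ⟨_, SimpleGraph.Walk.cons (adj_al i) (SimpleGraph.Walk.cons adj_ll'
      (SimpleGraph.Walk.cons (adj_bl' i).symm .nil)), ?_, rfl⟩
    simp [SimpleGraph.Walk.isPath_def]
  obtain ⟨p, hp, hw⟩ := Nat.sInf_mem hne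
  have h1 := pot_le_walk (pot_lip i hA) p
  have h2 : pot n A B i (V.a i) = 0 := by simp [pot]
  have h3 : pot n A B i (V.b i) = (n + 2) * M + 2 := by
    simp only [pot, M]
    omega
  rw [dist, ← hw]
  omega

lemma dist_upper (hn : 1 ≤ n) (x y : V n) :
    dist n A B x y ≤ (n + 2) * M + 2 ∧
      ((∀ i : Fin n, (A i).val * (B i).val = 0) → dist n A B x y ≤ (n + 2) * M + 1) := by
  have h00 : ((⟨0, hn⟩ : Fin n) : ℕ) = 0 := rfl
  have hA0 := (A ⟨0, hn⟩).isLt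
  have hB0 := (B ⟨0, hn⟩).isLt
  cases x with
  | a i =>
    have hi := i.isLt
    have hAi := (A i).isLt
    cases y with
    | a j =>
      have hj := j.isLt
      have hAj := (A j).isLt
      by_cases hij : i = j
      · subst hij
        exact ⟨le_trans dist_le0 (Nat.zero_le _), fun _ => le_trans dist_le0 (Nat.zero_le _)⟩
      · have hij' : i.val ≠ j.val := fun hh => hij (Fin.ext hh)
        rcases lt_or_ge (i.val + j.val + 2) (n + 1) with h' | h'
        · have h := dist_le2 (A := A) (B := B) (adj_al i) (adj_al j).symm (fun hh => hij (V.a.inj hh))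
          simp only [wtE, wt0, M] at h
          exact ⟨h.trans (by simp only [M]; omega), fun _ => h.trans (by simp only [M]; omega)⟩
        · have h := dist_le2 (A := A) (B := B) (adj_ar i) (adj_ar j).symm (fun hh => hij (V.a.inj hh))
          simp only [wtE, wt0, M] at h
          exact ⟨h.trans (by simp only [M]; omega), fun _ => h.trans (by simp only [M]; omega)⟩
    | b j =>
      have hj := j.isLt
      have hBj := (B j).isLt
      by_cases hij : i = j
      · subst hij
        have h := dist_le3 (A := A) (B := B) (adj_al i) adj_ll' (adj_bl' i).symm nofun nofun nofun
        simp only [wtE, wt0, M] at h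
        refine ⟨h.trans (by simp only [M]; omega), fun hd => h.trans ?_⟩
        simp only [M]
        rcases Nat.mul_eq_zero.mp (hd i) with h5 | h5 <;> omega
      · have hij' : i.val ≠ j.val := fun hh => hij (Fin.ext hh)
        rcases lt_or_ge i.val j.val with h' | h'
        · have h := dist_le3 (A := A) (B := B) (adj_al i) adj_ll' (adj_bl' j).symm nofun nofun nofun
          simp only [wtE, wt0, M] at h
          exact ⟨h.trans (by simp only [M]; omega), fun _ => h.trans (by simp only [M]; omega)⟩
        · have h := dist_le3 (A := A) (B := B) (adj_ar i) adj_rr' (adj_br' j).symm nofun nofun nofun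
          simp only [wtE, wt0, M] at h
          exact ⟨h.trans (by simp only [M]; omega), fun _ => h.trans (by simp only [M]; omega)⟩
    | l =>
      have h := dist_le1 (A := A) (B := B) (adj_al i)
      simp only [wtE, wt0, M] at h
      exact ⟨h.trans (by simp only [M]; omega), fun _ => h.trans (by simp only [M]; omega)⟩
    | r =>
      have h := dist_le1 (A := A) (B := B) (adj_ar i)
      simp only [wtE, wt0, M] at h
      exact ⟨h.trans (by simp only [M]; omega), fun _ => h.trans (by simp only [M]; omega)⟩
    | l' =>
      have h := dist_le2 (A := A) (B := B) (adj_al i) adj_ll' nofun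
      simp only [wtE, wt0, M] at h
      exact ⟨h.trans (by simp only [M]; omega), fun _ => h.trans (by simp only [M]; omega)⟩
    | r' =>
      have h := dist_le2 (A := A) (B := B) (adj_ar i) adj_rr' nofun
      simp only [wtE, wt0, M] at h
      exact ⟨h.trans (by simp only [M]; omega), fun _ => h.trans (by simp only [M]; omega)⟩
  | b i =>
    have hi := i.isLt
    have hBi := (B i).isLt
    cases y with
    | a j =>
      have hj := j.isLt
      have hAj := (A j).isLt
      by_cases hij : i = j
      · subst hij
        have h := dist_le3 (A := A) (B := B) (adj_bl' i) adj_ll'.symm (adj_al i).symm nofun nofun nofun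
        simp only [wtE, wt0, M] at h
        refine ⟨h.trans (by simp only [M]; omega), fun hd => h.trans ?_⟩
        simp only [M]
        rcases Nat.mul_eq_zero.mp (hd i) with h5 | h5 <;> omega
      · have hij' : i.val ≠ j.val := fun hh => hij (Fin.ext hh)
        rcases lt_or_ge i.val j.val with h' | h'
        · have h := dist_le3 (A := A) (B := B) (adj_br' i) adj_rr'.symm (adj_ar j).symm nofun nofun nofun
          simp only [wtE, wt0, M] at h
          exact ⟨h.trans (by simp only [M]; omega), fun _ => h.trans (by simp only [M]; omega)⟩
        · have h := dist_le3 (A := A) (B := B) (adj_bl' i) adj_ll'.symm (adj_al j).symm nofun nofun nofun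
          simp only [wtE, wt0, M] at h
          exact ⟨h.trans (by simp only [M]; omega), fun _ => h.trans (by simp only [M]; omega)⟩
    | b j =>
      have hj := j.isLt
      have hBj := (B j).isLt
      by_cases hij : i = j
      · subst hij
        exact ⟨le_trans dist_le0 (Nat.zero_le _), fun _ => le_trans dist_le0 (Nat.zero_le _)⟩
      · rcases lt_or_ge (i.val + j.val + 2) (n + 1) with h' | h'
        · have h := dist_le2 (A := A) (B := B) (adj_br' i) (adj_br' j).symm (fun hh => hij (V.b.inj hh))
          simp only [wtE, wt0, M] at h
          exact ⟨h.trans (by simp only [M]; omega), fun _ => h.trans (by simp only [M]; omega)⟩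
        · have h := dist_le2 (A := A) (B := B) (adj_bl' i) (adj_bl' j).symm (fun hh => hij (V.b.inj hh))
          simp only [wtE, wt0, M] at h
          exact ⟨h.trans (by simp only [M]; omega), fun _ => h.trans (by simp only [M]; omega)⟩
    | l =>
      have h := dist_le2 (A := A) (B := B) (adj_bl' i) adj_ll'.symm nofun
      simp only [wtE, wt0, M] at h
      exact ⟨h.trans (by simp only [M]; omega), fun _ => h.trans (by simp only [M]; omega)⟩
    | r =>
      have h := dist_le2 (A := A) (B := B) (adj_br' i) adj_rr'.symm nofun
      simp only [wtE, wt0, M] at h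
      exact ⟨h.trans (by simp only [M]; omega), fun _ => h.trans (by simp only [M]; omega)⟩
    | l' =>
      have h := dist_le1 (A := A) (B := B) (adj_bl' i)
      simp only [wtE, wt0, M] at h
      exact ⟨h.trans (by simp only [M]; omega), fun _ => h.trans (by simp only [M]; omega)⟩
    | r' =>
      have h := dist_le1 (A := A) (B := B) (adj_br' i)
      simp only [wtE, wt0, M] at h
      exact ⟨h.trans (by simp only [M]; omega), fun _ => h.trans (by simp only [M]; omega)⟩
  | l =>
    cases y with
    | a j =>
      have hj := j.isLt
      have hAj := (A j).isLt
      have h := dist_le1 (A := A) (B := B) (adj_al j).symm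
      simp only [wtE, wt0, M] at h
      exact ⟨h.trans (by simp only [M]; omega), fun _ => h.trans (by simp only [M]; omega)⟩
    | b j =>
      have hj := j.isLt
      have hBj := (B j).isLt
      have h := dist_le2 (A := A) (B := B) adj_ll' (adj_bl' j).symm nofun
      simp only [wtE, wt0, M] at h
      exact ⟨h.trans (by simp only [M]; omega), fun _ => h.trans (by simp only [M]; omega)⟩
    | l =>
      exact ⟨le_trans dist_le0 (Nat.zero_le _), fun _ => le_trans dist_le0 (Nat.zero_le _)⟩
    | r =>
      have h := dist_le2 (A := A) (B := B) (adj_al ⟨0, hn⟩).symm (adj_ar ⟨0, hn⟩) nofun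
      simp only [wtE, wt0, M] at h
      exact ⟨h.trans (by simp only [M]; omega), fun _ => h.trans (by simp only [M]; omega)⟩
    | l' =>
      have h := dist_le1 (A := A) (B := B) adj_ll'
      simp only [wtE, wt0, M] at h
      exact ⟨h.trans (by simp only [M]; omega), fun _ => h.trans (by simp only [M]; omega)⟩
    | r' =>
      have h1 := dist_le3 (A := A) (B := B) adj_ll' (adj_bl' ⟨0, hn⟩).symm (adj_br' ⟨0, hn⟩) nofun nofun nofun
      have h2 := dist_le3 (A := A) (B := B) (adj_al ⟨0, hn⟩).symm (adj_ar ⟨0, hn⟩) adj_rr' nofun nofun nofun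
      simp only [wtE, wt0, M] at h1 h2
      refine ⟨h1.trans (by simp only [M]; omega), fun hd => ?_⟩
      have h0 := hd ⟨0, hn⟩
      rcases Nat.mul_eq_zero.mp h0 with h' | h'
      · exact h2.trans (by simp only [M]; omega)
      · exact h1.trans (by simp only [M]; omega)
  | r =>
    cases y with
    | a j =>
      have hj := j.isLt
      have hAj := (A j).isLt
      have h := dist_le1 (A := A) (B := B) (adj_ar j).symm
      simp only [wtE, wt0, M] at h
      exact ⟨h.trans (by simp only [M]; omega), fun _ => h.trans (by simp only [M]; omega)⟩
    | b j =>
      have hj := j.isLt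
      have hBj := (B j).isLt
      have h := dist_le2 (A := A) (B := B) adj_rr' (adj_br' j).symm nofun
      simp only [wtE, wt0, M] at h
      exact ⟨h.trans (by simp only [M]; omega), fun _ => h.trans (by simp only [M]; omega)⟩
    | l =>
      have h := dist_le2 (A := A) (B := B) (adj_ar ⟨0, hn⟩).symm (adj_al ⟨0, hn⟩) nofun
      simp only [wtE, wt0, M] at h
      exact ⟨h.trans (by simp only [M]; omega), fun _ => h.trans (by simp only [M]; omega)⟩
    | r =>
      exact ⟨le_trans dist_le0 (Nat.zero_le _), fun _ => le_trans dist_le0 (Nat.zero_le _)⟩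
    | l' =>
      have h1 := dist_le3 (A := A) (B := B) adj_rr' (adj_br' ⟨0, hn⟩).symm (adj_bl' ⟨0, hn⟩) nofun nofun nofun
      have h2 := dist_le3 (A := A) (B := B) (adj_ar ⟨0, hn⟩).symm (adj_al ⟨0, hn⟩) adj_ll' nofun nofun nofun
      simp only [wtE, wt0, M] at h1 h2
      refine ⟨h1.trans (by simp only [M]; omega), fun hd => ?_⟩
      have h0 := hd ⟨0, hn⟩
      rcases Nat.mul_eq_zero.mp h0 with h' | h'
      · exact h2.trans (by simp only [M]; omega)
      · exact h1.trans (by simp only [M]; omega)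
    | r' =>
      have h := dist_le1 (A := A) (B := B) adj_rr'
      simp only [wtE, wt0, M] at h
      exact ⟨h.trans (by simp only [M]; omega), fun _ => h.trans (by simp only [M]; omega)⟩
  | l' =>
    cases y with
    | a j =>
      have hj := j.isLt
      have hAj := (A j).isLt
      have h := dist_le2 (A := A) (B := B) adj_ll'.symm (adj_al j).symm nofun
      simp only [wtE, wt0, M] at h
      exact ⟨h.trans (by simp only [M]; omega), fun _ => h.trans (by simp only [M]; omega)⟩
    | b j =>
      have hj := j.isLt
      have hBj := (B j).isLt
      have h := dist_le1 (A := A) (B := B) (adj_bl' j).symm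
      simp only [wtE, wt0, M] at h
      exact ⟨h.trans (by simp only [M]; omega), fun _ => h.trans (by simp only [M]; omega)⟩
    | l =>
      have h := dist_le1 (A := A) (B := B) adj_ll'.symm
      simp only [wtE, wt0, M] at h
      exact ⟨h.trans (by simp only [M]; omega), fun _ => h.trans (by simp only [M]; omega)⟩
    | r =>
      have h1 := dist_le3 (A := A) (B := B) (adj_bl' ⟨0, hn⟩).symm (adj_br' ⟨0, hn⟩) adj_rr'.symm nofun nofun nofun
      have h2 := dist_le3 (A := A) (B := B) adj_ll'.symm (adj_al ⟨0, hn⟩).symm (adj_ar ⟨0, hn⟩) nofun nofun nofun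
      simp only [wtE, wt0, M] at h1 h2
      refine ⟨h1.trans (by simp only [M]; omega), fun hd => ?_⟩
      have h0 := hd ⟨0, hn⟩
      rcases Nat.mul_eq_zero.mp h0 with h' | h'
      · exact h2.trans (by simp only [M]; omega)
      · exact h1.trans (by simp only [M]; omega)
    | l' =>
      exact ⟨le_trans dist_le0 (Nat.zero_le _), fun _ => le_trans dist_le0 (Nat.zero_le _)⟩
    | r' =>
      have h := dist_le2 (A := A) (B := B) (adj_bl' ⟨0, hn⟩).symm (adj_br' ⟨0, hn⟩) nofun
      simp only [wtE, wt0, M] at h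
      exact ⟨h.trans (by simp only [M]; omega), fun _ => h.trans (by simp only [M]; omega)⟩
  | r' =>
    cases y with
    | a j =>
      have hj := j.isLt
      have hAj := (A j).isLt
      have h := dist_le2 (A := A) (B := B) adj_rr'.symm (adj_ar j).symm nofun
      simp only [wtE, wt0, M] at h
      exact ⟨h.trans (by simp only [M]; omega), fun _ => h.trans (by simp only [M]; omega)⟩
    | b j =>
      have hj := j.isLt
      have hBj := (B j).isLt
      have h := dist_le1 (A := A) (B := B) (adj_br' j).symm
      simp only [wtE, wt0, M] at h
      exact ⟨h.trans (by simp only [M]; omega), fun _ => h.trans (by simp only [M]; omega)⟩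
    | l =>
      have h1 := dist_le3 (A := A) (B := B) (adj_br' ⟨0, hn⟩).symm (adj_bl' ⟨0, hn⟩) adj_ll'.symm nofun nofun nofun
      have h2 := dist_le3 (A := A) (B := B) adj_rr'.symm (adj_ar ⟨0, hn⟩).symm (adj_al ⟨0, hn⟩) nofun nofun nofun
      simp only [wtE, wt0, M] at h1 h2
      refine ⟨h1.trans (by simp only [M]; omega), fun hd => ?_⟩
      have h0 := hd ⟨0, hn⟩
      rcases Nat.mul_eq_zero.mp h0 with h' | h'
      · exact h2.trans (by simp only [M]; omega)
      · exact h1.trans (by simp only [M]; omega)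
    | r =>
      have h := dist_le1 (A := A) (B := B) adj_rr'.symm
      simp only [wtE, wt0, M] at h
      exact ⟨h.trans (by simp only [M]; omega), fun _ => h.trans (by simp only [M]; omega)⟩
    | l' =>
      have h := dist_le2 (A := A) (B := B) (adj_br' ⟨0, hn⟩).symm (adj_bl' ⟨0, hn⟩) nofun
      simp only [wtE, wt0, M] at h
      exact ⟨h.trans (by simp only [M]; omega), fun _ => h.trans (by simp only [M]; omega)⟩
    | r' =>
      exact ⟨le_trans dist_le0 (Nat.zero_le _), fun _ => le_trans dist_le0 (Nat.zero_le _)⟩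


theorem diam_iff_disjoint' (hn : 1 ≤ n) :
    ((∃ i : Fin n, (A i).val = 1 ∧ (B i).val = 1) → diam n A B = (n + 2) * M + 2)
    ∧ ((∀ i : Fin n, (A i).val * (B i).val = 0) → diam n A B ≤ (n + 2) * M + 1)
    ∧ (diam n A B ≤ (n + 2) * M + 1 ↔ ∀ i : Fin n, (A i).val * (B i).val = 0) := by
  have hub : ∀ x y : V n, dist n A B x y ≤ (n + 2) * M + 2 :=
    fun x y => (dist_upper hn x y).1
  have hub1 : (∀ i : Fin n, (A i).val * (B i).val = 0) →
      diam n A B ≤ (n + 2) * M + 1 :=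
    fun hd => Finset.sup_le fun p _ => (dist_upper hn p.1 p.2).2 hd
  have hda : ∀ i : Fin n, (A i).val = 1 → (B i).val = 1 →
      diam n A B = (n + 2) * M + 2 := by
    intro i hA hB
    apply le_antisymm (Finset.sup_le fun p _ => hub p.1 p.2)
    exact le_trans (dist_lower i hA hB)
      (Finset.le_sup (f := fun p : V n × V n => dist n A B p.1 p.2)
        (Finset.mem_univ (V.a i, V.b i)))
  refine ⟨fun ⟨i, hA, hB⟩ => hda i hA hB, hub1, ?_, hub1⟩
  intro hle i
  by_contra hne
  have hA := (A i).isLt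
  have hB := (B i).isLt
  obtain ⟨h1, h2⟩ := Nat.mul_ne_zero_iff.mp hne
  have heq := hda i (by omega) (by omega)
  rw [heq] at hle
  simp only [M] at hle
  omega

end

/-- The weighted diameter is `(n+2)·M + 2` if some coordinate has `A[i] = B[i] = 1`, and is
at most `(n+2)·M + 1` otherwise; equivalently, the diameter is at most `(n+2)·M + 1` iff
`A` and `B` are disjoint. -/
theorem diam_iff_disjoint (n : ℕ) (hn : 1 ≤ n) (A B : Fin n → Fin 2) :
    ((∃ i : Fin n, (A i).val = 1 ∧ (B i).val = 1) → diam n A B = (n + 2) * M + 2)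
    ∧ ((∀ i : Fin n, (A i).val * (B i).val = 0) → diam n A B ≤ (n + 2) * M + 1)
    ∧ (diam n A B ≤ (n + 2) * M + 1 ↔ ∀ i : Fin n, (A i).val * (B i).val = 0) := by
  exact diam_iff_disjoint' (n := n) (A := A) (B := B) hn

end DiamGadget
end

section
/- In the graph G, for all a≠b in {1,…,n} and all vertices x∈S_a, y∈S_b, the weighted shortest-path distance is realized by a two-edge path through ℓ or through r: d(x,y) = min( w(x,ℓ)+w(ℓ,y), w(x,r)+w(r,y) ). -/
open Finset

namespace OVGadget

inductive V (n d : ℕ) : Type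
  | U : Fin n → Fin d → V n d
  | U' : Fin n → Fin d → V n d
  | l : V n d
  | r : V n d
  deriving DecidableEq, Fintype

def M : ℕ := 4

/-- One-directional edge-weight table encoding the vectors `v_1, …, v_n`; a value `0` means
"no edge".  Here `j : Fin d` is 0-indexed, so `U k j` is the paper's `u_{k+1, j+1}`, whence
the weights `(j+1)·M + v_k[j]` and `(2d+1−(j+1))·M + v_k[j] = (2d−j)·M + v_k[j]`. -/
def wt0 (n d : ℕ) (v : Fin n → Fin d → Fin 2) : V n d → V n d → ℕ
  | V.U k j, V.l => (j.val + 1) * M + (v k j).val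
  | V.U' k j, V.l => (2 * d - j.val) * M + (v k j).val
  | V.U k j, V.r => (2 * d - j.val) * M + (v k j).val
  | V.U' k j, V.r => (j.val + 1) * M + (v k j).val
  | _, _ => 0

/-- The symmetrized edge weight. -/
def wtE (n d : ℕ) (v : Fin n → Fin d → Fin 2) (x y : V n d) : ℕ :=
  wt0 n d v x y + wt0 n d v y x

/-- The graph `G`: `x` and `y` are adjacent iff the weight table records an edge. -/
def G (n d : ℕ) (v : Fin n → Fin d → Fin 2) : SimpleGraph (V n d) :=
  SimpleGraph.fromRel fun x y => wt0 n d v x y ≠ 0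

/-- The total weight of a walk. -/
def wWeight {n d : ℕ} {v : Fin n → Fin d → Fin 2} {x y : V n d}
    (p : (G n d v).Walk x y) : ℕ :=
  (p.darts.map fun e => wtE n d v e.toProd.1 e.toProd.2).sum

/-- The weighted shortest-path distance: the minimum over paths from `x` to `y` of the sum
of the edge weights along the path. -/
noncomputable def dist (n d : ℕ) (v : Fin n → Fin d → Fin 2) (x y : V n d) : ℕ :=
  sInf {m | ∃ p : (G n d v).Walk x y, p.IsPath ∧ wWeight p = m}

/-- Membership in the set `S_k = {u_{k,j}, u'_{k,j} : j}`. -/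
def inS (n d : ℕ) (k : Fin n) (x : V n d) : Prop :=
  (∃ j : Fin d, x = V.U k j) ∨ (∃ j : Fin d, x = V.U' k j)

/-- The set `S_k` as a finite set of vertices. -/
def SF (n d : ℕ) (k : Fin n) : Finset (V n d) :=
  (Finset.univ.image fun j : Fin d => V.U k j)
    ∪ (Finset.univ.image fun j : Fin d => V.U' k j)

/-- `Max-Dist(S_a, S_b) = max_{x ∈ S_a, y ∈ S_b} d(x, y)`. -/
noncomputable def maxDist (n d : ℕ) (v : Fin n → Fin d → Fin 2) (a b : Fin n) : ℕ :=
  (SF n d a ×ˢ SF n d b).sup fun p => dist n d v p.1 p.2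

variable {n d : ℕ} {v : Fin n → Fin d → Fin 2}

def isU {n d : ℕ} : V n d → Prop
  | V.U _ _ => True
  | V.U' _ _ => True
  | _ => False

lemma adj_u_hub {x h : V n d} (hx : isU x) (hh : h = V.l ∨ h = V.r) :
    (G n d v).Adj x h := by
  rw [G, SimpleGraph.fromRel_adj]
  cases x <;> simp [isU] at hx <;> rcases hh with rfl | rfl <;>
    rename_i k j <;>
    refine ⟨by simp, Or.inl ?_⟩ <;>
    · have := j.isLt
      simp [wt0, M]
      try omega

lemma adj_char {p q : V n d} (h : (G n d v).Adj p q) :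
    (isU p ∧ (q = V.l ∨ q = V.r)) ∨ (isU q ∧ (p = V.l ∨ p = V.r)) := by
  rw [G, SimpleGraph.fromRel_adj] at h
  obtain ⟨hne, h | h⟩ := h <;> cases p <;> cases q <;> simp_all [wt0, isU]

lemma wtE_symm (x y : V n d) : wtE n d v x y = wtE n d v y x := by
  unfold wtE; try omega

lemma wtE_u_hub {x h : V n d} (hx : isU x) (hh : h = V.l ∨ h = V.r) :
    wtE n d v x h ≤ 8 * d + 1 := by
  cases x <;> simp [isU] at hx <;> rcases hh with rfl | rfl <;>
    rename_i k j <;>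
    · have := j.isLt
      have := (v k j).isLt
      simp [wtE, wt0, M]
      try omega

lemma wtE_lr_ge {z : V n d} (hz : isU z) :
    8 * d + 4 ≤ wtE n d v z V.l + wtE n d v z V.r := by
  cases z <;> simp [isU] at hz <;>
    rename_i k j <;>
    · have := j.isLt
      simp [wtE, wt0, M]
      try omega

lemma wWeight_nil {x : V n d} : wWeight (.nil : (G n d v).Walk x x) = 0 := by
  simp [wWeight]

lemma wWeight_cons {x w y : V n d} (h : (G n d v).Adj x w) (p : (G n d v).Walk w y) :
    wWeight (SimpleGraph.Walk.cons h p) = wtE n d v x w + wWeight p := by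
  simp [wWeight]

lemma not_lr {x : V n d} (hx : isU x) : x ≠ V.l ∧ x ≠ V.r := by
  cases x <;> simp_all [isU]

lemma hub_next {w z : V n d} (hw : w = V.l ∨ w = V.r) (h : (G n d v).Adj w z) :
    isU z := by
  rcases adj_char h with ⟨hiw, _⟩ | ⟨hz, _⟩
  · rcases hw with rfl | rfl <;> simp [isU] at hiw
  · exact hz

lemma u_next {z w : V n d} (hz : isU z) (h : (G n d v).Adj z w) :
    w = V.l ∨ w = V.r := by
  rcases adj_char h with ⟨_, hw⟩ | ⟨_, hzl⟩
  · exact hw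
  · rcases hzl with rfl | rfl <;> simp [isU] at hz

lemma weight_ge {x y : V n d} (hx : isU x) (hy : isU y)
    (p : (G n d v).Walk x y) (hp : p.IsPath) (hxy : x ≠ y) :
    min (wtE n d v x V.l + wtE n d v V.l y) (wtE n d v x V.r + wtE n d v V.r y)
      ≤ wWeight p := by
  cases p with
  | nil => exact absurd rfl hxy
  | cons h q =>
    rename_i w
    have hw : w = V.l ∨ w = V.r := u_next hx h
    rw [SimpleGraph.Walk.cons_isPath_iff] at hp
    obtain ⟨hq, hxs⟩ := hp
    cases q with
    | nil => rcases hw with rfl | rfl <;> simp [isU] at hy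
    | cons h2 q2 =>
      rename_i z
      have hz : isU z := hub_next hw h2
      rw [SimpleGraph.Walk.cons_isPath_iff] at hq
      obtain ⟨hq2, hws⟩ := hq
      cases q2 with
      | nil =>
        rw [wWeight_cons, wWeight_cons, wWeight_nil]
        rcases hw with rfl | rfl
        · omega
        · omega
      | cons h3 q3 =>
        rename_i w2
        have hw2 : w2 = V.l ∨ w2 = V.r := u_next hz h3
        have hww2 : w ≠ w2 := by
          intro hh
          apply hws
          rw [hh, SimpleGraph.Walk.support_cons]
          exact List.mem_cons_of_mem _ (SimpleGraph.Walk.start_mem_support _)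
        rw [SimpleGraph.Walk.cons_isPath_iff] at hq2
        obtain ⟨hq3, hzs⟩ := hq2
        cases q3 with
        | nil => rcases hw2 with rfl | rfl <;> simp [isU] at hy
        | cons h4 q4 =>
          rename_i z2
          have hz2 : isU z2 := hub_next hw2 h4
          rw [SimpleGraph.Walk.cons_isPath_iff] at hq3
          obtain ⟨hq4, hw2s⟩ := hq3
          cases q4 with
          | nil =>
            rw [wWeight_cons, wWeight_cons, wWeight_cons, wWeight_cons, wWeight_nil]
            have b2 := wtE_lr_ge (v := v) hz
            have e1 : wtE n d v V.l z = wtE n d v z V.l := wtE_symm _ _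
            have e2 : wtE n d v V.r z = wtE n d v z V.r := wtE_symm _ _
            rcases hw with rfl | rfl <;> rcases hw2 with rfl | rfl
            · exact absurd rfl hww2
            · have b1 := wtE_u_hub (v := v) hx (Or.inr rfl)
              omega
            · have b1 := wtE_u_hub (v := v) hx (Or.inl rfl)
              omega
            · exact absurd rfl hww2
          | cons h5 q5 =>
            exfalso
            rename_i w3
            have hw3 : w3 = V.l ∨ w3 = V.r := u_next hz2 h5
            have hm : w3 ∈ q5.support :=
              SimpleGraph.Walk.start_mem_support _
            have hne1 : w3 ≠ w := by
              intro hh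
              apply hws
              simp only [SimpleGraph.Walk.support_cons, List.mem_cons]
              exact Or.inr (Or.inr (Or.inr (hh ▸ hm)))
            have hne2 : w3 ≠ w2 := by
              intro hh
              apply hw2s
              simp only [SimpleGraph.Walk.support_cons, List.mem_cons]
              exact Or.inr (hh ▸ hm)
            rcases hw with rfl | rfl <;> rcases hw2 with rfl | rfl <;>
              rcases hw3 with rfl | rfl <;> simp_all

/-- For `a ≠ b` and `x ∈ S_a`, `y ∈ S_b`, the distance is realized by a two-edge path
through `ℓ` or through `r`. -/
theorem dist_eq_two_edge_path (n d : ℕ) (hn : 2 ≤ n) (hd : 1 ≤ d)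
    (v : Fin n → Fin d → Fin 2) (a b : Fin n) (hab : a ≠ b)
    (x y : V n d) (hx : inS n d a x) (hy : inS n d b y) :
    dist n d v x y =
      min (wtE n d v x V.l + wtE n d v V.l y) (wtE n d v x V.r + wtE n d v V.r y) := by
  have hxu : isU x := by rcases hx with ⟨j, rfl⟩ | ⟨j, rfl⟩ <;> trivial
  have hyu : isU y := by rcases hy with ⟨j, rfl⟩ | ⟨j, rfl⟩ <;> trivial
  have hxy : x ≠ y := by
    rcases hx with ⟨j, rfl⟩ | ⟨j, rfl⟩ <;> rcases hy with ⟨j', rfl⟩ | ⟨j', rfl⟩ <;>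
      simp [hab]
  have hxl := (not_lr hxu).1
  have hxr := (not_lr hxu).2
  have hyl := (not_lr hyu).1
  have hyr := (not_lr hyu).2
  -- the two-edge walks
  let pL : (G n d v).Walk x y :=
    SimpleGraph.Walk.cons (adj_u_hub hxu (Or.inl rfl))
      (SimpleGraph.Walk.cons (adj_u_hub hyu (Or.inl rfl)).symm SimpleGraph.Walk.nil)
  let pR : (G n d v).Walk x y :=
    SimpleGraph.Walk.cons (adj_u_hub hxu (Or.inr rfl))
      (SimpleGraph.Walk.cons (adj_u_hub hyu (Or.inr rfl)).symm SimpleGraph.Walk.nil)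
  have hpL : pL.IsPath := by
    simp [pL, SimpleGraph.Walk.cons_isPath_iff, hxy, hxl, Ne.symm hyl]
  have hpR : pR.IsPath := by
    simp [pR, SimpleGraph.Walk.cons_isPath_iff, hxy, hxr, Ne.symm hyr]
  have hwL : wWeight pL = wtE n d v x V.l + wtE n d v V.l y := by
    simp [pL, wWeight_cons, wWeight_nil]
  have hwR : wWeight pR = wtE n d v x V.r + wtE n d v V.r y := by
    simp [pR, wWeight_cons, wWeight_nil]
  apply le_antisymm
  · apply le_min
    · exact Nat.sInf_le ⟨pL, hpL, hwL⟩
    · exact Nat.sInf_le ⟨pR, hpR, hwR⟩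
  · obtain ⟨p, hp, hw⟩ :=
      Nat.sInf_mem (⟨_, pL, hpL, hwL⟩ :
        {m | ∃ p : (G n d v).Walk x y, p.IsPath ∧ wWeight p = m}.Nonempty)
    rw [dist, ← hw]
    exact weight_ge hxu hyu p hp hxy

end OVGadget
end

section
/- There is a number f depending only on d and M (and not on the vectors) such that in the graph G, for all a≠b in {1,…,n}: Sum-Dist(S_a,S_b) = f + 2·Ham(v_a,v_b). Consequently, a pair of sets S_a,S_b minimizes Sum-Dist over all pairs if and only if the pair of vectors v_a,v_b minimizes the Hamming distance over all pairs. -/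
open Finset

namespace SumGadget

inductive V (n d : ℕ) : Type
  | U : Fin n → Fin d → V n d
  | U' : Fin n → Fin d → V n d
  | l : V n d
  | r : V n d
  deriving DecidableEq, Fintype

def M : ℕ := 4

/-- One-directional edge-weight table encoding the vectors, with complemented bits on the
right side; a value `0` means "no edge".  Here `j : Fin d` is 0-indexed, so `U k j` is the
paper's `u_{k+1, j+1}`. -/
def wt0 (n d : ℕ) (v : Fin n → Fin d → Fin 2) : V n d → V n d → ℕ
  | V.U k j, V.l => (j.val + 1) * M + (v k j).val
  | V.U' k j, V.l => (2 * d - j.val) * M + (v k j).val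
  | V.U k j, V.r => (2 * d - j.val) * M + (1 - (v k j).val)
  | V.U' k j, V.r => (j.val + 1) * M + (1 - (v k j).val)
  | _, _ => 0

/-- The symmetrized edge weight. -/
def wtE (n d : ℕ) (v : Fin n → Fin d → Fin 2) (x y : V n d) : ℕ :=
  wt0 n d v x y + wt0 n d v y x

/-- The graph `G`: `x` and `y` are adjacent iff the weight table records an edge. -/
def G (n d : ℕ) (v : Fin n → Fin d → Fin 2) : SimpleGraph (V n d) :=
  SimpleGraph.fromRel fun x y => wt0 n d v x y ≠ 0

/-- The total weight of a walk. -/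
def wWeight {n d : ℕ} {v : Fin n → Fin d → Fin 2} {x y : V n d}
    (p : (G n d v).Walk x y) : ℕ :=
  (p.darts.map fun e => wtE n d v e.toProd.1 e.toProd.2).sum

/-- The weighted shortest-path distance: the minimum over paths from `x` to `y` of the sum
of the edge weights along the path. -/
noncomputable def dist (n d : ℕ) (v : Fin n → Fin d → Fin 2) (x y : V n d) : ℕ :=
  sInf {m | ∃ p : (G n d v).Walk x y, p.IsPath ∧ wWeight p = m}

/-- The set `S_k = {u_{k,j}, u'_{k,j} : j}` as a finite set of vertices. -/
def SF (n d : ℕ) (k : Fin n) : Finset (V n d) :=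
  (Finset.univ.image fun j : Fin d => V.U k j)
    ∪ (Finset.univ.image fun j : Fin d => V.U' k j)

/-- `Sum-Dist(S_a, S_b) = Σ_{x ∈ S_a, y ∈ S_b} d(x, y)`. -/
noncomputable def sumDist (n d : ℕ) (v : Fin n → Fin d → Fin 2) (a b : Fin n) : ℕ :=
  ∑ p ∈ SF n d a ×ˢ SF n d b, dist n d v p.1 p.2

/-- The Hamming distance between `v_a` and `v_b`. -/
def ham (n d : ℕ) (v : Fin n → Fin d → Fin 2) (a b : Fin n) : ℕ :=
  (Finset.univ.filter fun i : Fin d => v a i ≠ v b i).card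

def isU {n d : ℕ} : V n d → Prop
  | V.U _ _ => True
  | V.U' _ _ => True
  | _ => False

variable {n d : ℕ} {v : Fin n → Fin d → Fin 2}

lemma isU_ne_l {x : V n d} (h : isU x) : x ≠ V.l := by
  cases x <;> simp_all [isU]

lemma isU_ne_r {x : V n d} (h : isU x) : x ≠ V.r := by
  cases x <;> simp_all [isU]

lemma wt0_l_ne {x : V n d} (h : isU x) : wt0 n d v x V.l ≠ 0 := by
  cases x with
  | U k j => simp [wt0, M]
  | U' k j => have := j.isLt; simp [wt0, M]; omega
  | l => simp [isU] at h
  | r => simp [isU] at h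

lemma wt0_r_ne {x : V n d} (h : isU x) : wt0 n d v x V.r ≠ 0 := by
  cases x with
  | U k j => have := j.isLt; simp [wt0, M]; omega
  | U' k j => simp [wt0, M]
  | l => simp [isU] at h
  | r => simp [isU] at h

lemma adj_structure {x y : V n d} (h : (G n d v).Adj x y) :
    isU x ∧ (y = V.l ∨ y = V.r) ∨ isU y ∧ (x = V.l ∨ x = V.r) := by
  rw [G, SimpleGraph.fromRel_adj] at h
  obtain ⟨hne, h | h⟩ := h <;> cases x <;> cases y <;> simp_all [wt0, isU]

lemma next_of_u {x z : V n d} (hx : isU x) (h : (G n d v).Adj x z) :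
    z = V.l ∨ z = V.r := by
  rcases adj_structure h with ⟨_, h⟩ | ⟨_, rfl | rfl⟩
  · exact h
  · simp [isU] at hx
  · simp [isU] at hx

lemma next_of_lr {s z : V n d} (hs : s = V.l ∨ s = V.r) (h : (G n d v).Adj s z) :
    isU z := by
  rcases adj_structure h with ⟨hz, _⟩ | ⟨hz, _⟩
  · rcases hs with rfl | rfl <;> simp [isU] at hz
  · exact hz

lemma AB_sum {x : V n d} (h : isU x) :
    wt0 n d v x V.l + wt0 n d v x V.r = (2 * d + 1) * M + 1 := by
  cases x with
  | U k j => have := j.isLt; have := (v k j).isLt; simp [wt0, M]; omega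
  | U' k j => have := j.isLt; have := (v k j).isLt; simp [wt0, M]; omega
  | l => simp [isU] at h
  | r => simp [isU] at h

lemma adj_u_l {x : V n d} (h : isU x) : (G n d v).Adj x V.l := by
  rw [G, SimpleGraph.fromRel_adj]
  exact ⟨isU_ne_l h, Or.inl (wt0_l_ne h)⟩

lemma adj_u_r {x : V n d} (h : isU x) : (G n d v).Adj x V.r := by
  rw [G, SimpleGraph.fromRel_adj]
  exact ⟨isU_ne_r h, Or.inl (wt0_r_ne h)⟩

lemma wWeight_cons {x z y : V n d} (h : (G n d v).Adj x z) (p : (G n d v).Walk z y) :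
    wWeight (SimpleGraph.Walk.cons h p) = wtE n d v x z + wWeight p := by
  simp [wWeight, SimpleGraph.Walk.darts_cons]

lemma wWeight_nil {x : V n d} : wWeight (SimpleGraph.Walk.nil : (G n d v).Walk x x) = 0 := rfl

lemma wtE_to_l (x : V n d) : wtE n d v x V.l = wt0 n d v x V.l := by
  cases x <;> simp [wtE, wt0]

lemma wtE_of_l (x : V n d) : wtE n d v V.l x = wt0 n d v x V.l := by
  cases x <;> simp [wtE, wt0]

lemma wtE_to_r (x : V n d) : wtE n d v x V.r = wt0 n d v x V.r := by
  cases x <;> simp [wtE, wt0]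

lemma wtE_of_r (x : V n d) : wtE n d v V.r x = wt0 n d v x V.r := by
  cases x <;> simp [wtE, wt0]


open SimpleGraph Walk in
lemma dist_le_l {x y : V n d} (hx : isU x) (hy : isU y) (hxy : x ≠ y) :
    dist n d v x y ≤ wt0 n d v x V.l + wt0 n d v y V.l := by
  apply Nat.sInf_le
  refine ⟨Walk.cons (adj_u_l hx) (Walk.cons (adj_u_l hy).symm Walk.nil), ?_, ?_⟩
  · rw [Walk.isPath_def]
    simp [Walk.support_cons, hxy, isU_ne_l hx, (isU_ne_l hy).symm, Ne.symm (isU_ne_l hy)]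
  · rw [wWeight_cons, wWeight_cons, wWeight_nil, wtE_to_l, wtE_of_l]; omega

open SimpleGraph Walk in
lemma dist_le_r {x y : V n d} (hx : isU x) (hy : isU y) (hxy : x ≠ y) :
    dist n d v x y ≤ wt0 n d v x V.r + wt0 n d v y V.r := by
  apply Nat.sInf_le
  refine ⟨Walk.cons (adj_u_r hx) (Walk.cons (adj_u_r hy).symm Walk.nil), ?_, ?_⟩
  · rw [Walk.isPath_def]
    simp [Walk.support_cons, hxy, isU_ne_r hx, Ne.symm (isU_ne_r hy)]
  · rw [wWeight_cons, wWeight_cons, wWeight_nil, wtE_to_r, wtE_of_r]; omega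

open SimpleGraph Walk in
lemma weight_ge {x y : V n d} (hx : isU x) (hy : isU y) (hxy : x ≠ y)
    (p : (G n d v).Walk x y) (hp : p.IsPath) :
    min (wt0 n d v x V.l + wt0 n d v y V.l) (wt0 n d v x V.r + wt0 n d v y V.r)
      ≤ wWeight p := by
  cases p with
  | nil => exact absurd rfl hxy
  | cons h1 q =>
    rename_i z
    rcases next_of_u hx h1 with rfl | rfl
    · -- x — l — ...
      cases q with
      | nil => simp [isU] at hy
      | cons h2 q2 =>
        rename_i w
        have hw : isU w := next_of_lr (Or.inl rfl) h2
        cases q2 with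
        | nil =>
          rw [wWeight_cons, wWeight_cons, wWeight_nil, wtE_to_l, wtE_of_l]
          omega
        | cons h3 q3 =>
          rename_i s
          have hsl : V.l ≠ s := by
            have h5 := ((Walk.cons_isPath_iff _ _).1 hp.of_cons).2
            rw [Walk.support_cons] at h5
            intro hh
            exact h5 (List.mem_cons_of_mem _ (hh ▸ q3.start_mem_support))
          have hs : s = V.r := by
            rcases next_of_u hw h3 with rfl | rfl
            · exact absurd rfl hsl
            · rfl
          subst hs
          cases q3 with
          | nil => simp [isU] at hy
          | cons h4 q4 =>
            rename_i t
            have ht : isU t := next_of_lr (Or.inr rfl) h4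
            cases q4 with
            | nil =>
              rw [wWeight_cons, wWeight_cons, wWeight_cons, wWeight_cons, wWeight_nil,
                wtE_to_l, wtE_of_l, wtE_to_r, wtE_of_r]
              have h6 := AB_sum (v := v) hw
              have h7 := AB_sum (v := v) hy
              omega
            | cons h5 q5 =>
              rename_i s'
              exfalso
              have hl : V.l ∉ (Walk.cons h3 (Walk.cons h4 (Walk.cons h5 q5))).support :=
                ((Walk.cons_isPath_iff _ _).1 hp.of_cons).2
              have hr : V.r ∉ (Walk.cons h5 q5).support :=
                ((Walk.cons_isPath_iff _ _).1 hp.of_cons.of_cons.of_cons).2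
              have hmem : s' ∈ q5.support := q5.start_mem_support
              rcases next_of_u ht h5 with rfl | rfl
              · exact hl (by simp [Walk.support_cons])
              · exact hr (by simp [Walk.support_cons])
    · -- x — r — ...
      cases q with
      | nil => simp [isU] at hy
      | cons h2 q2 =>
        rename_i w
        have hw : isU w := next_of_lr (Or.inr rfl) h2
        cases q2 with
        | nil =>
          rw [wWeight_cons, wWeight_cons, wWeight_nil, wtE_to_r, wtE_of_r]
          omega
        | cons h3 q3 =>
          rename_i s
          have hsr : V.r ≠ s := by
            have h5 := ((Walk.cons_isPath_iff _ _).1 hp.of_cons).2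
            rw [Walk.support_cons] at h5
            intro hh
            exact h5 (List.mem_cons_of_mem _ (hh ▸ q3.start_mem_support))
          have hs : s = V.l := by
            rcases next_of_u hw h3 with rfl | rfl
            · rfl
            · exact absurd rfl hsr
          subst hs
          cases q3 with
          | nil => simp [isU] at hy
          | cons h4 q4 =>
            rename_i t
            have ht : isU t := next_of_lr (Or.inl rfl) h4
            cases q4 with
            | nil =>
              rw [wWeight_cons, wWeight_cons, wWeight_cons, wWeight_cons, wWeight_nil,
                wtE_to_r, wtE_of_r, wtE_to_l, wtE_of_l]
              have h6 := AB_sum (v := v) hw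
              have h7 := AB_sum (v := v) hy
              omega
            | cons h5 q5 =>
              rename_i s'
              exfalso
              have hr : V.r ∉ (Walk.cons h3 (Walk.cons h4 (Walk.cons h5 q5))).support :=
                ((Walk.cons_isPath_iff _ _).1 hp.of_cons).2
              have hl : V.l ∉ (Walk.cons h5 q5).support :=
                ((Walk.cons_isPath_iff _ _).1 hp.of_cons.of_cons.of_cons).2
              have hmem : s' ∈ q5.support := q5.start_mem_support
              rcases next_of_u ht h5 with rfl | rfl
              · exact hl (by simp [Walk.support_cons])
              · exact hr (by simp [Walk.support_cons])

open SimpleGraph Walk in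
lemma dist_eq {x y : V n d} (hx : isU x) (hy : isU y) (hxy : x ≠ y) :
    dist n d v x y =
      min (wt0 n d v x V.l + wt0 n d v y V.l) (wt0 n d v x V.r + wt0 n d v y V.r) := by
  apply le_antisymm
  · exact le_min (dist_le_l hx hy hxy) (dist_le_r hx hy hxy)
  · have hne : {m | ∃ p : (G n d v).Walk x y, p.IsPath ∧ wWeight p = m}.Nonempty := by
      refine ⟨_, Walk.cons (adj_u_l hx) (Walk.cons (adj_u_l hy).symm Walk.nil), ?_, rfl⟩
      rw [Walk.isPath_def]
      simp [Walk.support_cons, hxy, isU_ne_l hx, Ne.symm (isU_ne_l hy)]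
    obtain ⟨p, hp, hwp⟩ := Nat.sInf_mem hne
    rw [dist]
    rw [show sInf {m | ∃ p : (G n d v).Walk x y, p.IsPath ∧ wWeight p = m} = wWeight p from hwp.symm ▸ rfl]
    exact weight_ge hx hy hxy p hp

def Cc (d : ℕ) (i j : Fin d) : ℕ :=
  2 * ((i.val + j.val + 2) * M + 1)
    + 2 * ((2 * d + 1 - ((i.val - j.val) + (j.val - i.val))) * M)
    + (if i = j then 0 else 2)

lemma pointwise (a b : Fin n) (hab : a ≠ b) (i j : Fin d) :
    dist n d v (V.U a i) (V.U b j) + dist n d v (V.U' a i) (V.U' b j)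
      + dist n d v (V.U a i) (V.U' b j) + dist n d v (V.U' a i) (V.U b j)
    = Cc d i j + (if i = j then (if v a i = v b j then 0 else 2) else 0) := by
  have h1 : (V.U a i : V n d) ≠ V.U b j := by
    simp only [ne_eq, V.U.injEq, not_and]; intro h; exact absurd h hab
  have h2 : (V.U' a i : V n d) ≠ V.U' b j := by
    simp only [ne_eq, V.U'.injEq, not_and]; intro h; exact absurd h hab
  have h3 : (V.U a i : V n d) ≠ V.U' b j := by simp
  have h4 : (V.U' a i : V n d) ≠ V.U b j := by simp
  rw [dist_eq (by trivial) (by trivial) h1, dist_eq (by trivial) (by trivial) h2,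
    dist_eq (by trivial) (by trivial) h3, dist_eq (by trivial) (by trivial) h4]
  have hi := i.isLt
  have hj := j.isLt
  have hva := (v a i).isLt
  have hvb := (v b j).isLt
  have hij : (i = j) ↔ (i.val = j.val) := Fin.ext_iff
  have hv : (v a i = v b j) ↔ ((v a i).val = (v b j).val) := Fin.ext_iff
  simp only [wt0, Cc, M, hij, hv]
  split_ifs <;> omega

lemma sum_SF (k : Fin n) (g : V n d → ℕ) :
    ∑ x ∈ SF n d k, g x = ∑ j : Fin d, g (V.U k j) + ∑ j : Fin d, g (V.U' k j) := by
  rw [SF, Finset.sum_union, Finset.sum_image (by intro a b h; simpa using h),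
    Finset.sum_image (by intro a b h; simpa using h)]
  rw [Finset.disjoint_left]
  intro x hx hx'
  simp only [Finset.mem_image, Finset.mem_univ, true_and] at hx hx'
  obtain ⟨j, rfl⟩ := hx
  obtain ⟨j', h⟩ := hx'
  cases h

theorem sumDist_eq_ham' (n d : ℕ) (hn : 2 ≤ n) (hd : 1 ≤ d) :
    ∃ f : ℕ,
      (∀ v : Fin n → Fin d → Fin 2, ∀ a b : Fin n, a ≠ b →
        sumDist n d v a b = f + 2 * ham n d v a b)
      ∧ (∀ v : Fin n → Fin d → Fin 2, ∀ a b : Fin n, a ≠ b →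
          ((∀ a' b' : Fin n, a' ≠ b' → sumDist n d v a b ≤ sumDist n d v a' b')
            ↔ (∀ a' b' : Fin n, a' ≠ b' → ham n d v a b ≤ ham n d v a' b'))) := by
  have main : ∀ v : Fin n → Fin d → Fin 2, ∀ a b : Fin n, a ≠ b →
      sumDist n d v a b = (∑ i : Fin d, ∑ j : Fin d, Cc d i j) + 2 * ham n d v a b := by
    intro v a b hab
    calc sumDist n d v a b
        = ∑ x ∈ SF n d a, ∑ y ∈ SF n d b, dist n d v x y := by
          rw [sumDist, Finset.sum_product]
      _ = ∑ i : Fin d, ∑ j : Fin d,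
            (dist n d v (V.U a i) (V.U b j) + dist n d v (V.U' a i) (V.U' b j)
              + dist n d v (V.U a i) (V.U' b j) + dist n d v (V.U' a i) (V.U b j)) := by
          rw [sum_SF]
          simp only [sum_SF]
          simp only [Finset.sum_add_distrib]
          ring
      _ = ∑ i : Fin d, ∑ j : Fin d,
            (Cc d i j + if i = j then (if v a i = v b j then 0 else 2) else 0) :=
          Finset.sum_congr rfl fun i _ => Finset.sum_congr rfl fun j _ =>
            pointwise a b hab i j
      _ = (∑ i : Fin d, ∑ j : Fin d, Cc d i j) + 2 * ham n d v a b := by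
          simp only [Finset.sum_add_distrib]
          congr 1
          have hstep : ∀ i : Fin d,
              (∑ j : Fin d, if i = j then (if v a i = v b j then 0 else 2) else 0)
                = if v a i = v b i then 0 else 2 := by
            intro i
            rw [Finset.sum_ite_eq]
            simp
          simp only [hstep]
          rw [ham, Finset.card_filter, Finset.mul_sum]
          refine Finset.sum_congr rfl fun i _ => ?_
          by_cases h : v a i = v b i <;> simp [h]
  refine ⟨_, main, ?_⟩
  intro v a b hab
  constructor <;> intro H a' b' h'
  · have h1 := H a' b' h'
    rw [main v a b hab, main v a' b' h'] at h1
    omega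
  · have h1 := H a' b' h'
    rw [main v a b hab, main v a' b' h']
    omega

/-- There is a number `f` depending only on `d` and `M` (not on the vectors) such that for
all `a ≠ b`, `Sum-Dist(S_a,S_b) = f + 2·Ham(v_a,v_b)`; consequently a pair of sets
minimizes `Sum-Dist` iff the corresponding pair of vectors minimizes the Hamming
distance. -/
theorem sumDist_eq_ham (n d : ℕ) (hn : 2 ≤ n) (hd : 1 ≤ d) :
    ∃ f : ℕ,
      (∀ v : Fin n → Fin d → Fin 2, ∀ a b : Fin n, a ≠ b →
        sumDist n d v a b = f + 2 * ham n d v a b)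
      ∧ (∀ v : Fin n → Fin d → Fin 2, ∀ a b : Fin n, a ≠ b →
          ((∀ a' b' : Fin n, a' ≠ b' → sumDist n d v a b ≤ sumDist n d v a' b')
            ↔ (∀ a' b' : Fin n, a' ≠ b' → ham n d v a b ≤ ham n d v a' b'))) :=
  sumDist_eq_ham' n d hn hd

end SumGadget
end
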